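/- Let m ≥ 3 be odd with s = max{v₂(m+1), v₂(m−1)}. Then for every n ≥ 2 and every odd t ∈ ℤ₂, the 2-adic valuation of T_m(−1 + 2^n t) − (−1 + 2^n t) equals s + n + 1. -/

import Mathlib

open Polynomial Polynomial.Chebyshev

variable (R : Type*) [CommRing R]

theorem myU_mul_T (k : ℤ) : ∀ m : ℤ, 2 * U R (k - 1) * T R m = U R (k + m - 1) + U R (k - m - 1) := by
  intro m
  induction m using Polynomial.Chebyshev.induct with
  | zero => simp [two_mul]
  | one =>
    have h := U_add_two R (k - 2)
    simp only [T_one]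
    linear_combination (norm := ring_nf) -h
  | add_two m ih1 ih2 =>
    have h₁ := T_add_two R m
    have h₂ := U_add_two R (k + m - 1)
    have h₃ := U_sub_two R (k - m - 1)
    linear_combination (norm := ring_nf) 2 * U R (k-1) * h₁ + 2*(X:R[X])*ih1 - ih2 - h₂ - h₃
  | neg_add_one m ih1 ih2 =>
    have h₁ := T_sub_one R (-m)
    have h₂ := U_sub_two R (k - m)
    have h₃ := U_add_two R (k + m - 2)
    linear_combination (norm := ring_nf) 2 * U R (k-1) * h₁ + 2*(X:R[X])*ih1 - ih2 - h₂ - h₃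

theorem myT_sub_T (a : ℤ) : ∀ b : ℤ, T R (a + b) - T R (a - b) =
    2 * (X ^ 2 - 1) * U R (a - 1) * U R (b - 1) := by
  intro b
  induction b using Polynomial.Chebyshev.induct with
  | zero => norm_num
  | one =>
    have H := one_sub_X_sq_mul_U_eq_pol_in_T R (a - 1)
    have h := T_sub_one R a
    rw [show (1:ℤ) - 1 = 0 by norm_num, U_zero]
    ring_nf at H
    linear_combination (norm := ring_nf) -h + 2 * H
  | add_two b ih1 ih2 =>
    have h₁ := T_add_two R (a + b)
    have h₂ := T_sub_two R (a - b)
    have h₃ := U_add_two R (b - 1)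
    linear_combination (norm := ring_nf) h₁ - h₂ + 2*(X:R[X])*ih1 - ih2
      - 2*((X:R[X])^2-1)*(U R (a-1))*h₃
  | neg_add_one b ih1 ih2 =>
    have h₁ := T_sub_one R (a - b)
    have h₂ := T_add_one R (a + b)
    have h₃ := U_sub_two R (-b)
    linear_combination (norm := ring_nf) h₁ - h₂ + 2*(X:R[X])*ih1 - ih2
      - 2*((X:R[X])^2-1)*(U R (a-1))*h₃

theorem myU_double (j : ℤ) : U R (2*j - 1) = 2 * T R j * U R (j - 1) := by
  have h := myU_mul_T R j j
  simp only [show j + j - 1 = 2*j - 1 by ring, show j - j - 1 = (-1 : ℤ) by ring, U_neg_one,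
    add_zero] at h
  linear_combination -h

theorem T_eval_neg_one : ∀ k : ℕ, (T R k).eval (-1 : R) = (-1) ^ k := by
  intro k
  induction k using Nat.twoStepInduction with
  | zero => simp
  | one => simp
  | more k ih1 ih2 =>
    have h := T_add_two R k
    have e2 : ((k + 1 : ℕ) : ℤ) = (k : ℤ) + 1 := by push_cast; ring
    have e3 : ((k + 2 : ℕ) : ℤ) = (k : ℤ) + 2 := by push_cast; ring
    rw [e3, h, eval_sub, eval_mul, eval_mul, eval_ofNat, eval_X, ← e2, ih1, ih2]
    ring

theorem U_eval_neg_one : ∀ k : ℕ, (U R k).eval (-1 : R) = (-1) ^ k * (k + 1) := by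
  intro k
  induction k using Nat.twoStepInduction with
  | zero => simp
  | one => simp [U_one]; ring_nf
  | more k ih1 ih2 =>
    have h := U_add_two R k
    have e2 : ((k + 1 : ℕ) : ℤ) = (k : ℤ) + 1 := by push_cast; ring
    have e3 : ((k + 2 : ℕ) : ℤ) = (k : ℤ) + 2 := by push_cast; ring
    rw [e3, h, eval_sub, eval_mul, eval_mul, eval_ofNat, eval_X, ← e2, ih1, ih2]
    push_cast
    ring

-- valuation helpers for ℤ_[2]
lemma my_val_mul (x y : ℤ_[2]) (hx : x ≠ 0) (hy : y ≠ 0) :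
    (x * y).valuation = x.valuation + y.valuation := by
  exact PadicInt.valuation_mul hx hy

lemma my_odd_ne_zero (z : ℤ_[2]) (h : ¬ (2 : ℤ_[2]) ∣ z) : z ≠ 0 := by
  rintro rfl; exact h (dvd_zero _)

lemma my_odd_val (z : ℤ_[2]) (h : ¬ (2 : ℤ_[2]) ∣ z) : z.valuation = 0 := by
  have h2 : ((2 : ℕ) : ℤ_[2]) = (2 : ℤ_[2]) := by norm_cast
  have hz : z ≠ 0 := my_odd_ne_zero z h
  have hn : ‖z‖ = 1 := by
    rcases lt_or_eq_of_le (PadicInt.norm_le_one z) with h1 | h1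
    · exact absurd (h2 ▸ (PadicInt.norm_lt_one_iff_dvd z).1 h1) h
    · exact h1
  have := PadicInt.norm_eq_zpow_neg_valuation hz
  rw [hn] at this
  have h1 : ((2 : ℕ) : ℝ) ^ (-(z.valuation : ℤ)) = ((2:ℕ):ℝ) ^ (0 : ℤ) := by
    rw [← this]; norm_num
  have := zpow_right_injective₀ (by norm_num : (0:ℝ) < (2:ℕ)) (by norm_num) h1
  omega

lemma my_val_two : (2 : ℤ_[2]).valuation = 1 := by
  have h2 : ((2 : ℕ) : ℤ_[2]) = (2 : ℤ_[2]) := by norm_cast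
  rw [← h2]; exact PadicInt.valuation_p

lemma my_val_pow_mul (n : ℕ) (t : ℤ_[2]) (ht : t ≠ 0) :
    ((2 : ℤ_[2]) ^ n * t).valuation = n + t.valuation := by
  have h2 : ((2 : ℕ) : ℤ_[2]) = (2 : ℤ_[2]) := by norm_cast
  rw [← h2]; exact PadicInt.valuation_p_pow_mul n t ht

lemma my_int_odd (a : ℤ) (ha : ¬ (2:ℤ) ∣ a) : ¬ (2 : ℤ_[2]) ∣ ((a : ℤ_[2])) := by
  intro h
  have h2 : ((2 : ℕ) : ℤ_[2]) = (2 : ℤ_[2]) := by norm_cast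
  rw [← h2] at h
  have := (PadicInt.norm_int_lt_one_iff_dvd a).1 ((PadicInt.norm_lt_one_iff_dvd _).2 h)
  exact ha (by exact_mod_cast this)

lemma my_eval_odd (P : Polynomial ℤ_[2]) (x : ℤ_[2]) (hx : (2 : ℤ_[2]) ∣ (x + 1))
    (h : ¬ (2 : ℤ_[2]) ∣ P.eval (-1)) : ¬ (2 : ℤ_[2]) ∣ P.eval x := by
  intro hd
  have hdvd : (x - (-1)) ∣ (P.eval x - P.eval (-1)) := Polynomial.sub_dvd_eval_sub x (-1) P
  have h2 : (2 : ℤ_[2]) ∣ (P.eval x - P.eval (-1)) := by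
    refine dvd_trans ?_ hdvd
    simpa [sub_neg_eq_add] using hx
  exact h (by
    have : P.eval (-1) = P.eval x - (P.eval x - P.eval (-1)) := by ring
    rw [this]; exact dvd_sub hd h2)

lemma my_odd_one : ¬ (2:ℤ_[2]) ∣ (1 : ℤ_[2]) := by
  simpa using my_int_odd 1 (by norm_num)

lemma my_odd_neg_one_pow (j : ℕ) : ¬ (2:ℤ_[2]) ∣ ((-1)^j : ℤ_[2]) := by
  intro h
  apply my_odd_one
  have : (1 : ℤ_[2]) = (-1)^j * (-1)^j := by
    rw [← pow_add, ← two_mul, pow_mul]; norm_num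
  rw [this]
  exact Dvd.dvd.mul_right h _

lemma my_U_val (x : ℤ_[2]) (hx : (2 : ℤ_[2]) ∣ (x + 1)) :
    ∀ k : ℕ, 1 ≤ k → ((U ℤ_[2] ((k:ℤ) - 1)).eval x ≠ 0 ∧
      ((U ℤ_[2] ((k:ℤ) - 1)).eval x).valuation = (padicValNat 2 k : ℤ)) := by
  intro k
  induction k using Nat.strong_induction_on with
  | _ k ih =>
    intro hk
    rcases Nat.even_or_odd k with he | ho
    · -- even case : k = 2*j
      obtain ⟨j, hj⟩ := he
      have hj' : k = 2 * j := by omega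
      have hj1 : 1 ≤ j := by omega
      have hjk : j < k := by omega
      have hidx : (k:ℤ) - 1 = 2 * (j:ℤ) - 1 := by
        rw [hj']; push_cast; ring
      have hd := myU_double ℤ_[2] (j:ℤ)
      have he2 : (U ℤ_[2] ((k:ℤ)-1)).eval x
          = 2 * (T ℤ_[2] (j:ℤ)).eval x * (U ℤ_[2] ((j:ℤ)-1)).eval x := by
        rw [hidx, hd]; simp
      have hT : ¬ (2:ℤ_[2]) ∣ (T ℤ_[2] (j:ℤ)).eval x := by
        apply my_eval_odd _ _ hx
        rw [_root_.T_eval_neg_one]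
        exact my_odd_neg_one_pow j
      obtain ⟨hU0, hUval⟩ := ih j hjk hj1
      have hT0 : (T ℤ_[2] (j:ℤ)).eval x ≠ 0 := my_odd_ne_zero _ hT
      have h20 : (2 : ℤ_[2]) ≠ 0 := two_ne_zero
      constructor
      · rw [he2]; exact mul_ne_zero (mul_ne_zero h20 hT0) hU0
      · rw [he2, my_val_mul _ _ (mul_ne_zero h20 hT0) hU0, my_val_mul _ _ h20 hT0,
          my_val_two, my_odd_val _ hT, Nat.cast_add, hUval]
        have : padicValNat 2 k = 1 + padicValNat 2 j := by
          rw [hj', padicValNat.mul (by norm_num) (by omega), padicValNat.self (by norm_num)]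
        rw [this]; push_cast; ring
    · -- odd case
      obtain ⟨j, hj⟩ := ho
      have hidx : (k:ℤ) - 1 = ((2*j : ℕ) : ℤ) := by push_cast; omega
      have hodd : ¬ (2:ℤ_[2]) ∣ (U ℤ_[2] ((k:ℤ)-1)).eval x := by
        apply my_eval_odd _ _ hx
        rw [hidx, _root_.U_eval_neg_one]
        have h1 : ((-1 : ℤ_[2])) ^ (2*j) = 1 := by
          rw [pow_mul]; norm_num
        rw [h1, one_mul]
        have h2 : ((2*j : ℕ) : ℤ_[2]) + 1 = (((2*j+1 : ℕ) : ℤ) : ℤ_[2]) := by push_cast; ring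
        rw [h2]
        exact my_int_odd _ (by omega)
      constructor
      · exact my_odd_ne_zero _ hodd
      · rw [my_odd_val _ hodd, padicValNat.eq_zero_of_not_dvd (by omega)]

theorem chebyshev_valuation_near_neg_one (m : ℕ) (hm : 3 ≤ m) (hodd : Odd m)
    (s : ℕ) (hs : s = max (padicValNat 2 (m + 1)) (padicValNat 2 (m - 1)))
    (n : ℕ) (hn : 2 ≤ n) (t : ℤ_[2]) (ht : ¬ (2 : ℤ_[2]) ∣ t) :
    ((Polynomial.Chebyshev.T ℤ_[2] m).eval (-1 + 2 ^ n * t) - (-1 + 2 ^ n * t)).valuation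
      = (s : ℤ) + (n : ℤ) + 1 := by
  obtain ⟨c, hc⟩ := hodd
  have hc1 : 1 ≤ c := by omega
  set x : ℤ_[2] := -1 + 2 ^ n * t with hxdef
  -- basic facts about x
  have ht0 : t ≠ 0 := my_odd_ne_zero t ht
  have hx1 : x + 1 = 2 ^ n * t := by rw [hxdef]; ring
  have h2n : (2:ℤ_[2]) ^ n = 2 ^ (n-1) * 2 := by
    rw [← pow_succ]; congr 1; omega
  have hx1dvd : (2 : ℤ_[2]) ∣ (x + 1) := by
    rw [hx1, h2n]
    exact ⟨2 ^ (n-1) * t, by ring⟩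
  have hxm : x - 1 = 2 * (2 ^ (n-1) * t - 1) := by
    rw [hxdef, h2n]; ring
  have hwodd : ¬ (2 : ℤ_[2]) ∣ (2 ^ (n-1) * t - 1) := by
    intro h
    apply my_odd_one
    have h2 : (2 : ℤ_[2]) ∣ 2 ^ (n-1) * t :=
      dvd_mul_of_dvd_left (dvd_pow_self 2 (by omega : n - 1 ≠ 0)) t
    have : (1 : ℤ_[2]) = 2 ^ (n-1) * t - (2 ^ (n-1) * t - 1) := by ring
    rw [this]; exact dvd_sub h2 h
  -- the key polynomial identity, evaluated at x
  have hid := myT_sub_T ℤ_[2] ((c:ℤ)+1) (c:ℤ)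
  rw [show (c:ℤ)+1+(c:ℤ) = ((m:ℕ):ℤ) by push_cast [hc]; ring,
      show (c:ℤ)+1-(c:ℤ) = 1 by ring, T_one,
      show (c:ℤ)+1-1 = ((c+1:ℕ):ℤ) - 1 by push_cast; ring] at hid
  have heval := congrArg (Polynomial.eval x) hid
  simp only [Polynomial.eval_sub, Polynomial.eval_mul, Polynomial.eval_ofNat,
    Polynomial.eval_pow, Polynomial.eval_X, Polynomial.eval_one] at heval
  set Uc : ℤ_[2] := (U ℤ_[2] (((c+1:ℕ):ℤ) - 1)).eval x with hUcdef
  set Ud : ℤ_[2] := (U ℤ_[2] (((c:ℕ):ℤ) - 1)).eval x with hUddef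
  obtain ⟨hUc0, hUcval⟩ := my_U_val x hx1dvd (c+1) (by omega)
  obtain ⟨hUd0, hUdval⟩ := my_U_val x hx1dvd c (by omega)
  -- nonzeroness of factors
  have h20 : (2 : ℤ_[2]) ≠ 0 := two_ne_zero
  have hxp0 : x + 1 ≠ 0 := by
    rw [hx1]; exact mul_ne_zero (pow_ne_zero n h20) ht0
  have hw0 : (2 ^ (n-1) * t - 1 : ℤ_[2]) ≠ 0 := my_odd_ne_zero _ hwodd
  have hxm0 : x - 1 ≠ 0 := by rw [hxm]; exact mul_ne_zero h20 hw0
  -- valuations of factors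
  have vxp : (x + 1).valuation = (n : ℤ) := by
    rw [hx1, my_val_pow_mul n t ht0, my_odd_val t ht, add_zero]
  have vxm : (x - 1).valuation = 1 := by
    rw [hxm, my_val_mul _ _ h20 hw0, my_val_two, my_odd_val _ hwodd, add_zero]
  -- rewrite the difference as a product
  have heval2 : (Polynomial.Chebyshev.T ℤ_[2] (m:ℤ)).eval x - x
      = 2 * ((x + 1) * (x - 1)) * Uc * Ud := by
    rw [heval]; ring
  rw [heval2]
  have hP0 : (x+1) * (x-1) ≠ 0 := mul_ne_zero hxp0 hxm0
  rw [my_val_mul _ _ (mul_ne_zero (mul_ne_zero h20 hP0) hUc0) hUd0,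
      my_val_mul _ _ (mul_ne_zero h20 hP0) hUc0,
      my_val_mul _ _ h20 hP0,
      my_val_mul _ _ hxp0 hxm0,
      my_val_two, Nat.cast_add, Nat.cast_add, Nat.cast_add, Nat.cast_add, vxp, vxm, hUcval, hUdval]
  -- arithmetic with padic valuations
  have hm1 : m + 1 = 2 * (c + 1) := by omega
  have hm2 : m - 1 = 2 * c := by omega
  have pv1 : padicValNat 2 (m+1) = 1 + padicValNat 2 (c+1) := by
    rw [hm1, padicValNat.mul (by norm_num) (by omega), padicValNat.self (by norm_num)]
  have pv2 : padicValNat 2 (m-1) = 1 + padicValNat 2 c := by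
    rw [hm2, padicValNat.mul (by norm_num) (by omega), padicValNat.self (by norm_num)]
  have hkey : s = 1 + padicValNat 2 (c+1) + padicValNat 2 c := by
    rcases Nat.even_or_odd c with hce | hco
    · have h0 : padicValNat 2 (c+1) = 0 := by
        apply padicValNat.eq_zero_of_not_dvd
        obtain ⟨d, hd⟩ := hce; omega
      rw [hs, pv1, pv2, h0]
      have : 2 ∣ c := by obtain ⟨d, hd⟩ := hce; omega
      have h1 : 1 ≤ padicValNat 2 c := one_le_padicValNat_of_dvd (by omega) this
      omega
    · have h0 : padicValNat 2 c = 0 := by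
        apply padicValNat.eq_zero_of_not_dvd
        obtain ⟨d, hd⟩ := hco; omega
      have : 2 ∣ (c+1) := by obtain ⟨d, hd⟩ := hco; omega
      have h1 : 1 ≤ padicValNat 2 (c+1) := one_le_padicValNat_of_dvd (by omega) this
      rw [hs, pv1, pv2, h0]
      omega
  rw [hkey]
  push_cast
  ring
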